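/- For n ≥ 1, the generating function A_n(u,v,q) = ∑_{λ∈A_n} q^{|λ|} u^{|⌊λ⌋|} v^{o(⌊λ⌋)} satisfies the recurrence A_n(u,v,q) = ∑_{m=0}^{n} [n choose m]_q · q^{binom(m+1,2)} · u^m · ∑_{λ∈A_m} q^{|λ|} u^{|⌊λ⌋|} v^{m − o(⌊λ⌋)}, as formal power series in u, v, q (for λ ∈ A_m one has o(⌊λ⌋) ≤ m, so all exponents of v are nonnegative; the inner sum is (uv)^m·A_m(u, 1/v, q) in the paper's notation, and the m = 0 term is 1, corresponding to A_0 = 1). -/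

import Mathlib

noncomputable section

/-- The three-variable generating function `A_n(u,v,q) = ∑_{λ∈A_n} q^{|λ|}
u^{|⌊λ⌋|} v^{o(⌊λ⌋)}` of the anti-lecture hall compositions, as a formal power
series in `u = X 0`, `v = X 1`, `q = X 2`, defined by its coefficients. -/
def alhGF (n : ℕ) : MvPowerSeries (Fin 3) ℚ :=
  fun d => (Nat.card {l : Fin n → ℕ //
    (∀ i : Fin n, ∀ h : i.1 + 1 < n,
      ((i.1 : ℤ) + 1) * (l ⟨i.1 + 1, h⟩ : ℤ) ≤ ((i.1 : ℤ) + 2) * (l i : ℤ)) ∧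
    (∑ i : Fin n, l i / (i.1 + 1)) = d 0 ∧
    (Finset.univ.filter (fun i : Fin n => Odd (l i / (i.1 + 1)))).card = d 1 ∧
    (∑ i, l i) = d 2} : ℚ)

/-- The inner sum `∑_{λ∈A_m} q^{|λ|} u^{|⌊λ⌋|} v^{m-o(⌊λ⌋)}` of the recurrence,
as a formal power series in `u = X 0`, `v = X 1`, `q = X 2`. -/
def alhGFinner (m : ℕ) : MvPowerSeries (Fin 3) ℚ :=
  fun d => (Nat.card {l : Fin m → ℕ //
    (∀ i : Fin m, ∀ h : i.1 + 1 < m,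
      ((i.1 : ℤ) + 1) * (l ⟨i.1 + 1, h⟩ : ℤ) ≤ ((i.1 : ℤ) + 2) * (l i : ℤ)) ∧
    (∑ i : Fin m, l i / (i.1 + 1)) = d 0 ∧
    m - (Finset.univ.filter (fun i : Fin m => Odd (l i / (i.1 + 1)))).card = d 1 ∧
    (∑ i, l i) = d 2} : ℚ)

open MvPowerSeries Finset Finsupp


/-- number of partitions with at most `b` parts, each at most `m`, of total `s`,
realized as antitone functions. -/
@[simp] def tailPred (m b s : ℕ) (c : Fin b → ℕ) : Prop :=
  Antitone c ∧ (∀ i, c i ≤ m) ∧ ∑ i, c i = s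

def tailCount (m b s : ℕ) : ℕ :=
  Nat.card {c : Fin b → ℕ // tailPred m b s c}

lemma card_split_pred {α : Type*} (P Q : α → Prop) [Finite {x // P x}] :
    Nat.card {x // P x} =
      Nat.card {x // P x ∧ Q x} + Nat.card {x // P x ∧ ¬ Q x} := by
  classical
  have e := (Equiv.sumCompl (fun a : {x // P x} => Q a.1))
  have h1 : Finite {a : {x // P x} // Q a.1} := Subtype.finite
  have h2 : Finite {a : {x // P x} // ¬ Q a.1} := Subtype.finite
  rw [← Nat.card_congr e, Nat.card_sum]
  congr 1
  · exact Nat.card_congr (Equiv.subtypeSubtypeEquivSubtypeInter P Q)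
  · exact Nat.card_congr (Equiv.subtypeSubtypeEquivSubtypeInter P (fun x => ¬ Q x))

lemma tailFinite (P : (Fin 0 → ℕ) → Prop) : True := trivial

lemma finite_sub {k : ℕ} (P : (Fin k → ℕ) → Prop) (s : ℕ)
    (h : ∀ l, P l → ∀ i, l i ≤ s) : Finite {l : Fin k → ℕ // P l} := by
  refine Finite.of_injective
    (fun x => (fun i => (⟨x.1 i, Nat.lt_succ_of_le (h x.1 x.2 i)⟩ : Fin (s + 1)))) ?_
  intro a b hab
  apply Subtype.ext; funext i
  have := congrFun hab i
  simpa [Fin.mk.injEq] using this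

lemma finite_tail (m b s : ℕ) :
    Finite {c : Fin b → ℕ // tailPred m b s c} :=
  finite_sub _ m (fun l hl i => hl.2.1 i)

lemma tailCount_zero_right (m s : ℕ) : tailCount m 0 s = if s = 0 then 1 else 0 := by
  rcases eq_or_ne s 0 with rfl | hs
  · rw [if_pos rfl]
    have : Nonempty {c : Fin 0 → ℕ // tailPred m 0 0 c} :=
      ⟨⟨fun i => i.elim0, fun a => a.elim0, fun i => i.elim0, by simp⟩⟩
    exact Nat.card_unique
  · rw [if_neg hs]
    have : IsEmpty {c : Fin 0 → ℕ // tailPred m 0 s c} := by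
      constructor; rintro ⟨c, -, -, hc⟩
      simp at hc; exact hs hc.symm
    exact Nat.card_of_isEmpty

lemma tailCount_zero_left (b s : ℕ) : tailCount 0 b s = if s = 0 then 1 else 0 := by
  rcases eq_or_ne s 0 with rfl | hs
  · rw [if_pos rfl]
    have hsub : Subsingleton {c : Fin b → ℕ // tailPred 0 b 0 c} := by
      constructor
      intro x y
      apply Subtype.ext; funext i
      have := x.2.2.1 i; have := y.2.2.1 i; omega
    have : Nonempty {c : Fin b → ℕ // tailPred 0 b 0 c} :=
      ⟨⟨fun _ => 0, antitone_const, fun _ => le_rfl, by simp⟩⟩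
    exact Nat.card_unique
  · rw [if_neg hs]
    have : IsEmpty {c : Fin b → ℕ // tailPred 0 b s c} := by
      constructor; rintro ⟨c, -, hc, hcs⟩
      apply hs; rw [← hcs]
      symm; rw [Finset.sum_eq_zero]
      intro i _; have := hc i; omega
    exact Nat.card_of_isEmpty

lemma tailCount_vanish (m b s : ℕ) (h : m * b < s) : tailCount m b s = 0 := by
  have : IsEmpty {c : Fin b → ℕ // tailPred m b s c} := by
    constructor; rintro ⟨c, -, hc, hcs⟩
    have h1 : ∑ i, c i ≤ ∑ _i : Fin b, m := Finset.sum_le_sum (fun i _ => hc i)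
    simp [Finset.sum_const, Finset.card_univ] at h1
    have h2 : b * m = m * b := Nat.mul_comm _ _
    omega
  exact Nat.card_of_isEmpty

lemma antitone_cons {b : ℕ} (x : ℕ) (c : Fin b → ℕ) (hc : Antitone c)
    (hx : ∀ i, c i ≤ x) : Antitone (Fin.cons x c : Fin (b+1) → ℕ) := by
  intro j j' hjj'
  induction j using Fin.cases with
  | zero =>
    induction j' using Fin.cases with
    | zero => exact le_rfl
    | succ i' => simpa using hx i'
  | succ i =>
    induction j' using Fin.cases with
    | zero => exact absurd hjj' (by simp [Fin.le_def])
    | succ i' =>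
      simp only [Fin.cons_succ]
      exact hc (by rwa [Fin.succ_le_succ_iff] at hjj')

lemma tailCount_rec (m b s : ℕ) :
    tailCount (m+1) (b+1) s =
      tailCount m (b+1) s + (if m+1 ≤ s then tailCount (m+1) b (s - (m+1)) else 0) := by
  classical
  have hfin : Finite {c // tailPred (m+1) (b+1) s c} := finite_tail (m+1) (b+1) s
  rw [tailCount, card_split_pred (tailPred (m+1) (b+1) s) (fun c => c 0 ≤ m)]
  congr 1
  · -- first component: c 0 ≤ m ↔ all entries ≤ m
    rw [tailCount]
    apply Nat.card_congr
    apply Equiv.subtypeEquivRight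
    intro c
    constructor
    · rintro ⟨⟨hA, hB, hC⟩, h0⟩
      exact ⟨hA, fun i => le_trans (hA (Fin.zero_le i)) h0, hC⟩
    · rintro ⟨hA, hB, hC⟩
      exact ⟨⟨hA, fun i => le_trans (hB i) (by omega), hC⟩, hB 0⟩
  · -- second component: c 0 = m + 1
    split_ifs with hls
    · rw [tailCount]
      apply Nat.card_congr
      exact {
        toFun := fun x => ⟨fun i => x.1 i.succ, by
          obtain ⟨⟨hA, hB, hC⟩, h0⟩ := x.2
          refine ⟨fun i j hij => hA (by rwa [Fin.succ_le_succ_iff]),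
            fun i => hB i.succ, ?_⟩
          have h0' : x.1 0 = m + 1 := le_antisymm (hB 0) (by omega)
          have hsum := Fin.sum_univ_succ x.1
          rw [hC, h0'] at hsum
          show ∑ i : Fin b, x.1 i.succ = s - (m + 1)
          omega⟩
        invFun := fun y => ⟨Fin.cons (m+1) y.1, by
          obtain ⟨hA, hB, hC⟩ := y.2
          refine ⟨⟨antitone_cons _ _ hA hB, ?_, ?_⟩, by simp⟩
          · intro i
            induction i using Fin.cases with
            | zero => simp
            | succ i => simpa using hB i
          · rw [Fin.sum_univ_succ]
            simp only [Fin.cons_zero, Fin.cons_succ]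
            omega⟩
        left_inv := fun x => by
          apply Subtype.ext
          have h0' : x.1 0 = m + 1 :=
            le_antisymm (x.2.1.2.1 0) (by have := x.2.2; omega)
          conv_rhs => rw [← Fin.cons_self_tail x.1]
          rw [h0']; rfl
        right_inv := fun y => by
          apply Subtype.ext
          funext i
          simp [Fin.cons_succ] }
    · -- empty : c 0 = m+1 but sum s < m+1
      have : IsEmpty {c : Fin (b+1) → ℕ // tailPred (m+1) (b+1) s c ∧ ¬ c 0 ≤ m} := by
        constructor
        rintro ⟨c, ⟨hA, hB, hC⟩, h0⟩
        apply hls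
        have : c 0 ≤ ∑ i, c i := Finset.single_le_sum (fun i _ => Nat.zero_le _) (mem_univ 0)
        omega
      rw [Nat.card_of_isEmpty]


def alhP (n : ℕ) (l : Fin n → ℕ) : Prop :=
  ∀ i : Fin n, ∀ h : i.1 + 1 < n, (i.1 + 1) * l ⟨i.1 + 1, h⟩ ≤ (i.1 + 2) * l i

def floorSum (n : ℕ) (l : Fin n → ℕ) : ℕ := ∑ i : Fin n, l i / (i.1 + 1)

def oddCard (n : ℕ) (l : Fin n → ℕ) : ℕ :=
  (Finset.univ.filter (fun i : Fin n => Odd (l i / (i.1 + 1)))).card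

def mI {n : ℕ} (l : Fin n → ℕ) : ℕ :=
  (Finset.univ.filter (fun i : Fin n => i.1 + 1 ≤ l i)).card

def tailSum {n : ℕ} (l : Fin n → ℕ) : ℕ :=
  ∑ i ∈ Finset.univ.filter (fun i : Fin n => ¬ (i.1 + 1 ≤ l i)), l i

-- arithmetic steps
lemma div_antitone_step (j x y : ℕ) (h : (j+1) * y ≤ (j+2) * x) :
    y / (j+2) ≤ x / (j+1) := by
  have h1 : 0 < j + 1 := Nat.succ_pos j
  have hmod := Nat.div_add_mod x (j+1)
  have hlt : x % (j+1) < j+1 := Nat.mod_lt _ h1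
  set a := x / (j+1) with ha
  have hx : x ≤ (j+1) * a + j := by omega
  have key : (j+1) * y < (j+1) * ((j+2) * a + (j+2)) := by nlinarith
  have hy : y < (j+2) * a + (j+2) := by
    have := Nat.lt_of_mul_lt_mul_left key
    exact this
  have hy2 : y < (a + 1) * (j + 2) := by nlinarith
  exact Nat.lt_succ_iff.mp ((Nat.div_lt_iff_lt_mul (by omega)).mpr hy2)

lemma step_le (j x y : ℕ) (h : (j+1) * y ≤ (j+2) * x) (hx : x ≤ j) : y ≤ x := by
  by_contra hyx
  push_neg at hyx
  nlinarith

-- splitting a Fin n sum at position m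
lemma sum_split {M : Type*} [AddCommMonoid M] {n m : ℕ} (hm : m ≤ n) (f : Fin n → M) :
    ∑ i, f i = (∑ i : Fin m, f ⟨i.1, by omega⟩) + ∑ j : Fin (n - m), f ⟨m + j.1, by omega⟩ := by
  rw [← Equiv.sum_comp (finCongr (show m + (n - m) = n by omega)) f, Fin.sum_univ_add]
  congr 1 <;> apply Finset.sum_congr rfl <;> intro i _ <;> (congr 1; apply Fin.ext; simp)

-- lower set lemma
lemma filter_lowerset {n : ℕ} (p : Fin n → Prop) [DecidablePred p]
    (hp : ∀ i j : Fin n, i ≤ j → p j → p i) (i : Fin n) :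
    p i ↔ i.1 < (Finset.univ.filter p).card := by
  constructor
  · intro hpi
    have hsub : Finset.Iic i ⊆ Finset.univ.filter p := by
      intro j hj
      rw [Finset.mem_Iic] at hj
      exact Finset.mem_filter.2 ⟨Finset.mem_univ _, hp j i hj hpi⟩
    have := Finset.card_le_card hsub
    rwa [Fin.card_Iic] at this
  · intro hcard
    by_contra hpi
    have hsub : Finset.univ.filter p ⊆ Finset.Iio i := by
      intro j hj
      rw [Finset.mem_Iio]
      rcases lt_or_ge j i with h | h
      · exact h
      · exact absurd (hp i j h (Finset.mem_filter.1 hj).2) hpi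
    have := Finset.card_le_card hsub
    rw [Fin.card_Iio] at this
    omega

lemma card_filter_lt {n m : ℕ} (hm : m ≤ n) :
    ((Finset.univ : Finset (Fin n)).filter fun i => i.1 < m).card = m := by
  classical
  have himg : (Finset.univ : Finset (Fin n)).filter (fun i => i.1 < m)
      = (Finset.univ : Finset (Fin m)).image (Fin.castLE hm) := by
    ext i
    simp only [Finset.mem_filter, Finset.mem_univ, true_and, Finset.mem_image]
    constructor
    · intro h; exact ⟨⟨i.1, h⟩, rfl⟩
    · rintro ⟨j, rfl⟩; exact j.2
  rw [himg, Finset.card_image_of_injective _ (Fin.castLE_injective hm),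
    Finset.card_univ, Fintype.card_fin]

lemma mI_le {n : ℕ} (l : Fin n → ℕ) : mI l ≤ n := by
  rw [mI]
  have := Finset.card_filter_le (Finset.univ : Finset (Fin n))
    (fun i : Fin n => i.1 + 1 ≤ l i)
  simpa using this

-- the extended division sequence
def bq {n : ℕ} (l : Fin n → ℕ) : ℕ → ℕ :=
  fun j => if h : j < n then l ⟨j, h⟩ / (j + 1) else 0

lemma bq_anti {n : ℕ} {l : Fin n → ℕ} (hl : alhP n l) : Antitone (bq l) := by
  apply antitone_nat_of_succ_le
  intro j
  rw [bq, bq]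
  by_cases h1 : j + 1 < n
  · rw [dif_pos h1, dif_pos (by omega)]
    exact div_antitone_step j _ _ (hl ⟨j, by omega⟩ h1)
  · rw [dif_neg h1]
    exact Nat.zero_le _

lemma one_le_bq_iff {n : ℕ} (l : Fin n → ℕ) (i : Fin n) :
    i.1 + 1 ≤ l i ↔ 1 ≤ bq l i.1 := by
  rw [bq, dif_pos i.2, Nat.one_le_div_iff (by omega)]

lemma mI_spec {n : ℕ} {l : Fin n → ℕ} (hl : alhP n l) (i : Fin n) :
    i.1 + 1 ≤ l i ↔ i.1 < mI l := by
  classical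
  rw [mI]
  refine filter_lowerset (fun i : Fin n => i.1 + 1 ≤ l i) ?_ i
  intro i' j' hij hpj
  rw [one_le_bq_iff] at hpj ⊢
  exact le_trans hpj (bq_anti hl hij)


section Glue

variable {n m : ℕ}

def glue (hm : m ≤ n) (l' : Fin m → ℕ) (c : Fin (n - m) → ℕ) : Fin n → ℕ :=
  fun i => if h : i.1 < m then l' ⟨i.1, h⟩ + (i.1 + 1)
    else c ⟨i.1 - m, by have := i.2; omega⟩

lemma glue_lt (hm : m ≤ n) (l' : Fin m → ℕ) (c : Fin (n - m) → ℕ) (i : Fin n)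
    (h : i.1 < m) : glue hm l' c i = l' ⟨i.1, h⟩ + (i.1 + 1) := dif_pos h

lemma glue_ge (hm : m ≤ n) (l' : Fin m → ℕ) (c : Fin (n - m) → ℕ) (i : Fin n)
    (h : ¬ i.1 < m) :
    glue hm l' c i = c ⟨i.1 - m, by have := i.2; omega⟩ := dif_neg h

lemma glue_ge_le (hm : m ≤ n) (l' : Fin m → ℕ) (c : Fin (n - m) → ℕ)
    (hc : ∀ j, c j ≤ m) (i : Fin n) (h : ¬ i.1 < m) : glue hm l' c i ≤ m := by
  rw [glue_ge hm l' c i h]; exact hc _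

lemma glue_mem_iff (hm : m ≤ n) (l' : Fin m → ℕ) (c : Fin (n - m) → ℕ)
    (hc : ∀ j, c j ≤ m) (i : Fin n) :
    i.1 + 1 ≤ glue hm l' c i ↔ i.1 < m := by
  by_cases h : i.1 < m
  · rw [glue_lt hm l' c i h]
    constructor
    · intro _; exact h
    · intro _; omega
  · have hle := glue_ge_le hm l' c hc i h
    constructor
    · intro h2; omega
    · intro h2; exact absurd h2 h

lemma mI_glue (hm : m ≤ n) (l' : Fin m → ℕ) (c : Fin (n - m) → ℕ)
    (hc : ∀ j, c j ≤ m) : mI (glue hm l' c) = m := by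
  classical
  rw [mI]
  rw [Finset.filter_congr (fun i _ => by
    rw [glue_mem_iff hm l' c hc i] : ∀ i ∈ Finset.univ,
      ((i : Fin n).1 + 1 ≤ glue hm l' c i ↔ i.1 < m))]
  exact card_filter_lt hm

lemma glue_div_lt (hm : m ≤ n) (l' : Fin m → ℕ) (c : Fin (n - m) → ℕ) (i : Fin m) :
    glue hm l' c ⟨i.1, by omega⟩ / (i.1 + 1) = l' i / (i.1 + 1) + 1 := by
  rw [glue_lt hm l' c ⟨i.1, by omega⟩ i.2, Nat.add_div_right _ (by omega)]

lemma glue_div_ge (hm : m ≤ n) (l' : Fin m → ℕ) (c : Fin (n - m) → ℕ)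
    (hc : ∀ j, c j ≤ m) (j : Fin (n - m)) :
    glue hm l' c ⟨m + j.1, by have := j.2; omega⟩ / ((m + j.1) + 1) = 0 := by
  apply Nat.div_eq_of_lt
  have := glue_ge_le hm l' c hc ⟨m + j.1, by have := j.2; omega⟩ (by simp)
  omega

lemma floorSum_glue (hm : m ≤ n) (l' : Fin m → ℕ) (c : Fin (n - m) → ℕ)
    (hc : ∀ j, c j ≤ m) :
    floorSum n (glue hm l' c) = m + floorSum m l' := by
  rw [floorSum, sum_split hm (fun i => glue hm l' c i / (i.1 + 1))]
  have h1 : (∑ i : Fin m, glue hm l' c ⟨i.1, by omega⟩ / ((⟨i.1, by omega⟩ : Fin n).1 + 1))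
      = ∑ i : Fin m, (l' i / (i.1 + 1) + 1) := by
    apply Finset.sum_congr rfl
    intro i _
    exact glue_div_lt hm l' c i
  have h2 : (∑ j : Fin (n - m), glue hm l' c ⟨m + j.1, by have := j.2; omega⟩ /
        ((⟨m + j.1, by have := j.2; omega⟩ : Fin n).1 + 1)) = 0 := by
    apply Finset.sum_eq_zero
    intro j _
    exact glue_div_ge hm l' c hc j
  rw [h1, h2, Finset.sum_add_distrib]
  simp [floorSum, add_comm]

lemma oddCard_le {k : ℕ} (l' : Fin k → ℕ) : oddCard k l' ≤ k := by
  rw [oddCard]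
  simpa using Finset.card_filter_le (Finset.univ : Finset (Fin k)) _

lemma oddCard_glue (hm : m ≤ n) (l' : Fin m → ℕ) (c : Fin (n - m) → ℕ)
    (hc : ∀ j, c j ≤ m) :
    oddCard n (glue hm l' c) = m - oddCard m l' := by
  classical
  rw [oddCard, Finset.card_filter,
    sum_split hm (fun i => if Odd (glue hm l' c i / (i.1 + 1)) then 1 else 0)]
  have h1 : (∑ i : Fin m, if Odd (glue hm l' c ⟨i.1, by omega⟩ /
        ((⟨i.1, by omega⟩ : Fin n).1 + 1)) then 1 else 0)
      = ∑ i : Fin m, if ¬ Odd (l' i / (i.1 + 1)) then 1 else 0 := by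
    apply Finset.sum_congr rfl
    intro i _
    rw [glue_div_lt hm l' c i]; simp only [Nat.odd_add_one]
  have h2 : (∑ j : Fin (n - m), if Odd (glue hm l' c ⟨m + j.1, by have := j.2; omega⟩ /
        ((⟨m + j.1, by have := j.2; omega⟩ : Fin n).1 + 1)) then 1 else 0) = 0 := by
    apply Finset.sum_eq_zero
    intro j _
    rw [glue_div_ge hm l' c hc j]
    simp
  rw [h1, h2, add_zero, ← Finset.card_filter]
  have h3 := Finset.card_filter_add_card_filter_not
    (s := (Finset.univ : Finset (Fin m))) (p := fun i => Odd (l' i / (i.1 + 1)))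
  rw [Finset.card_univ, Fintype.card_fin] at h3
  have h4 : oddCard m l' = ((Finset.univ : Finset (Fin m)).filter
    (fun i => Odd (l' i / (i.1 + 1)))).card := rfl
  omega

lemma sum_id_choose (k : ℕ) : (∑ i : Fin k, (i.1 + 1)) = (k + 1).choose 2 := by
  rw [Fin.sum_univ_eq_sum_range (fun i => i + 1) k]
  have h2 := Finset.sum_range_id_mul_two (k + 1)
  have h3 : (∑ i ∈ Finset.range (k + 1), i) = ∑ i ∈ Finset.range k, (i + 1) := by
    rw [Finset.sum_range_succ']
    simp
  have h4 : (k + 1).choose 2 = (k + 1) * k / 2 := by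
    rw [Nat.choose_two_right, Nat.add_sub_cancel]
  rw [Nat.add_sub_cancel] at h2
  omega

lemma sum_glue (hm : m ≤ n) (l' : Fin m → ℕ) (c : Fin (n - m) → ℕ) :
    (∑ i, glue hm l' c i) = (m + 1).choose 2 + (∑ i, l' i) + ∑ j, c j := by
  rw [sum_split hm (glue hm l' c)]
  have h1 : (∑ i : Fin m, glue hm l' c ⟨i.1, by omega⟩)
      = ∑ i : Fin m, (l' i + (i.1 + 1)) := by
    apply Finset.sum_congr rfl
    intro i _
    rw [glue_lt hm l' c ⟨i.1, by omega⟩ i.2]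
  have h2 : (∑ j : Fin (n - m), glue hm l' c ⟨m + j.1, by have := j.2; omega⟩)
      = ∑ j, c j := by
    apply Finset.sum_congr rfl
    intro j _
    rw [glue_ge hm l' c ⟨m + j.1, by have := j.2; omega⟩ (by simp)]
    congr 1
    apply Fin.ext
    simp
  rw [h1, h2, Finset.sum_add_distrib, sum_id_choose]
  ring

lemma tailSum_glue (hm : m ≤ n) (l' : Fin m → ℕ) (c : Fin (n - m) → ℕ)
    (hc : ∀ j, c j ≤ m) :
    tailSum (glue hm l' c) = ∑ j, c j := by
  classical
  rw [tailSum]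
  rw [Finset.filter_congr (fun i _ => by
    rw [glue_mem_iff hm l' c hc i] : ∀ i ∈ Finset.univ,
      (¬ ((i : Fin n).1 + 1 ≤ glue hm l' c i) ↔ ¬ i.1 < m))]
  rw [Finset.sum_filter, sum_split hm (fun i => if ¬ i.1 < m then glue hm l' c i else 0)]
  have h1 : (∑ i : Fin m, if ¬ (⟨i.1, by omega⟩ : Fin n).1 < m then
      glue hm l' c ⟨i.1, by omega⟩ else 0) = 0 := by
    apply Finset.sum_eq_zero
    intro i _
    rw [if_neg]
    simp only [not_not]
    exact i.2
  have h2 : (∑ j : Fin (n - m), if ¬ (⟨m + j.1, by have := j.2; omega⟩ : Fin n).1 < m then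
      glue hm l' c ⟨m + j.1, by have := j.2; omega⟩ else 0) = ∑ j, c j := by
    apply Finset.sum_congr rfl
    intro j _
    rw [if_pos (by simp), glue_ge hm l' c ⟨m + j.1, by have := j.2; omega⟩ (by simp)]
    congr 1
    apply Fin.ext
    simp
  rw [h1, h2, zero_add]

lemma alhP_glue (hm : m ≤ n) (l' : Fin m → ℕ) (c : Fin (n - m) → ℕ)
    (hl' : alhP m l') (hanti : Antitone c) (hc : ∀ j, c j ≤ m) :
    alhP n (glue hm l' c) := by
  intro i h
  by_cases h1 : i.1 + 1 < m
  · have him : i.1 < m := by omega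
    have e1 : glue hm l' c ⟨i.1 + 1, h⟩ = l' ⟨i.1 + 1, h1⟩ + (i.1 + 2) :=
      glue_lt hm l' c ⟨i.1 + 1, h⟩ h1
    have e0 : glue hm l' c i = l' ⟨i.1, him⟩ + (i.1 + 1) := glue_lt hm l' c i him
    rw [e1, e0]
    have key : (i.1 + 1) * l' ⟨i.1 + 1, h1⟩ ≤ (i.1 + 2) * l' ⟨i.1, him⟩ :=
      hl' ⟨i.1, him⟩ h1
    nlinarith [key]
  · by_cases h2 : i.1 < m
    · -- boundary : i.1 + 1 = m
      have e1 : glue hm l' c ⟨i.1 + 1, h⟩ = c ⟨i.1 + 1 - m, by omega⟩ :=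
        glue_ge hm l' c ⟨i.1 + 1, h⟩ h1
      have e0 : glue hm l' c i = l' ⟨i.1, h2⟩ + (i.1 + 1) := glue_lt hm l' c i h2
      rw [e1, e0]
      have hcc : c ⟨i.1 + 1 - m, by omega⟩ ≤ i.1 + 1 := le_trans (hc _) (by omega)
      nlinarith [hcc]
    · have e1 : glue hm l' c ⟨i.1 + 1, h⟩ = c ⟨i.1 + 1 - m, by omega⟩ :=
        glue_ge hm l' c ⟨i.1 + 1, h⟩ h1
      have e0 : glue hm l' c i = c ⟨i.1 - m, by have := i.2; omega⟩ :=
        glue_ge hm l' c i h2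
      rw [e1, e0]
      have hle : c ⟨i.1 + 1 - m, by omega⟩ ≤ c ⟨i.1 - m, by have := i.2; omega⟩ := by
        apply hanti
        rw [Fin.mk_le_mk]
        omega
      exact Nat.mul_le_mul (by omega) hle

def headF (hm : m ≤ n) (l : Fin n → ℕ) : Fin m → ℕ :=
  fun i => l ⟨i.1, by have := i.2; omega⟩ - (i.1 + 1)

def tailF (hm : m ≤ n) (l : Fin n → ℕ) : Fin (n - m) → ℕ :=
  fun j => l ⟨m + j.1, by have := j.2; omega⟩

lemma glue_headF_tailF (hm : m ≤ n) (l : Fin n → ℕ)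
    (hsp : ∀ i : Fin n, (i.1 + 1 ≤ l i ↔ i.1 < m)) :
    glue hm (headF hm l) (tailF hm l) = l := by
  funext i
  by_cases h : i.1 < m
  · rw [glue_lt hm _ _ i h]
    show l i - (i.1 + 1) + (i.1 + 1) = l i
    exact Nat.sub_add_cancel ((hsp i).mpr h)
  · rw [glue_ge hm _ _ i h]
    show l ⟨m + (i.1 - m), by have := i.2; omega⟩ = l i
    congr 1
    apply Fin.ext
    show m + (i.1 - m) = i.1
    omega

lemma headF_glue (hm : m ≤ n) (l' : Fin m → ℕ) (c : Fin (n - m) → ℕ) :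
    headF hm (glue hm l' c) = l' := by
  funext i
  have him : i.1 < n := by have := i.2; omega
  show glue hm l' c ⟨i.1, him⟩ - (i.1 + 1) = l' i
  rw [glue_lt hm l' c ⟨i.1, him⟩ i.2]
  show l' i + (i.1 + 1) - (i.1 + 1) = l' i
  omega

lemma tailF_glue (hm : m ≤ n) (l' : Fin m → ℕ) (c : Fin (n - m) → ℕ) :
    tailF hm (glue hm l' c) = c := by
  funext j
  have hj : m + j.1 < n := by have := j.2; omega
  show glue hm l' c ⟨m + j.1, hj⟩ = c j
  rw [glue_ge hm l' c ⟨m + j.1, hj⟩ (show ¬ m + j.1 < m by omega)]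
  congr 1
  apply Fin.ext
  show m + j.1 - m = j.1
  omega

lemma alhP_headF (hm : m ≤ n) (l : Fin n → ℕ) (hl : alhP n l)
    (hsp : ∀ i : Fin n, (i.1 + 1 ≤ l i ↔ i.1 < m)) :
    alhP m (headF hm l) := by
  intro i h
  have h1 : i.1 + 1 < n := by omega
  have hlt : i.1 < n := by omega
  have hgl : (i.1 + 1) * l ⟨i.1 + 1, h1⟩ ≤ (i.1 + 2) * l ⟨i.1, hlt⟩ :=
    hl ⟨i.1, hlt⟩ h1
  have hx : i.1 + 1 ≤ l ⟨i.1, hlt⟩ := (hsp ⟨i.1, hlt⟩).mpr (show (i.1 : ℕ) < m from by omega)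
  have hy : i.1 + 2 ≤ l ⟨i.1 + 1, h1⟩ := (hsp ⟨i.1 + 1, h1⟩).mpr h
  show (i.1 + 1) * (l ⟨i.1 + 1, h1⟩ - (i.1 + 2)) ≤ (i.1 + 2) * (l ⟨i.1, hlt⟩ - (i.1 + 1))
  zify [hx, hy]
  zify at hgl
  nlinarith [hgl]

def tq (n m : ℕ) (l : Fin n → ℕ) : ℕ → ℕ :=
  fun j => if h : m + j < n then l ⟨m + j, h⟩ else 0

lemma tq_anti {l : Fin n → ℕ} (hl : alhP n l)
    (hsp : ∀ i : Fin n, (i.1 + 1 ≤ l i ↔ i.1 < m)) : Antitone (tq n m l) := by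
  apply antitone_nat_of_succ_le
  intro j
  by_cases h : m + (j + 1) < n
  · have hmjn : m + j < n := by omega
    have hq : m + j + 1 < n := by omega
    have e1 : tq n m l (j + 1) = l ⟨m + j + 1, hq⟩ := dif_pos h
    have e0 : tq n m l j = l ⟨m + j, hmjn⟩ := dif_pos hmjn
    rw [e1, e0]
    have hchain : (m + j + 1) * l ⟨m + j + 1, hq⟩ ≤ (m + j + 2) * l ⟨m + j, hmjn⟩ :=
      hl ⟨m + j, hmjn⟩ hq
    have hbd : l ⟨m + j, hmjn⟩ ≤ m + j := by
      have h2 : m + j + 1 ≤ l ⟨m + j, hmjn⟩ ↔ m + j < m := hsp ⟨m + j, hmjn⟩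
      omega
    by_contra hcon
    push_neg at hcon
    nlinarith [hchain, hbd, hcon]
  · have e1 : tq n m l (j + 1) = 0 := dif_neg h
    rw [e1]
    exact Nat.zero_le _

lemma tailF_eq_tq (hm : m ≤ n) (l : Fin n → ℕ) (j : Fin (n - m)) :
    tailF hm l j = tq n m l j.1 := by
  have hj : m + j.1 < n := by have := j.2; omega
  rw [tq, dif_pos hj]
  rfl

lemma tailF_anti (hm : m ≤ n) (l : Fin n → ℕ) (hl : alhP n l)
    (hsp : ∀ i : Fin n, (i.1 + 1 ≤ l i ↔ i.1 < m)) :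
    Antitone (tailF hm l) := by
  intro j j' hle
  rw [tailF_eq_tq hm l j, tailF_eq_tq hm l j']
  exact tq_anti hl hsp hle

lemma tailF_le (hm : m ≤ n) (l : Fin n → ℕ)  (hl : alhP n l)
    (hsp : ∀ i : Fin n, (i.1 + 1 ≤ l i ↔ i.1 < m)) (j : Fin (n - m)) :
    tailF hm l j ≤ m := by
  have hj : m + j.1 < n := by have := j.2; omega
  have hm0 : m + 0 < n := by omega
  have h1 : tq n m l j.1 ≤ tq n m l 0 := tq_anti hl hsp (Nat.zero_le _)
  have h2 : tq n m l 0 = l ⟨m + 0, hm0⟩ := dif_pos hm0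
  have h3 : m + 0 + 1 ≤ l ⟨m + 0, hm0⟩ ↔ m + 0 < m := hsp ⟨m + 0, hm0⟩
  rw [tailF_eq_tq hm l j]
  omega

lemma hsp_of {l : Fin n → ℕ} (hl : alhP n l) (hmI : mI l = m) :
    ∀ i : Fin n, (i.1 + 1 ≤ l i ↔ i.1 < m) := fun i => by
  rw [mI_spec hl i, hmI]

lemma tail_sum_of (hm : m ≤ n) (l : Fin n → ℕ) (hl : alhP n l)
    (hsp : ∀ i : Fin n, (i.1 + 1 ≤ l i ↔ i.1 < m)) :
    tailSum l = ∑ j, tailF hm l j := by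
  have hg := glue_headF_tailF hm l hsp
  have h := tailSum_glue hm (headF hm l) (tailF hm l) (tailF_le hm l hl hsp)
  rw [hg] at h
  exact h

lemma floorSum_of (hm : m ≤ n) (l : Fin n → ℕ) (hl : alhP n l)
    (hsp : ∀ i : Fin n, (i.1 + 1 ≤ l i ↔ i.1 < m)) :
    floorSum n l = m + floorSum m (headF hm l) := by
  have hg := glue_headF_tailF hm l hsp
  have h := floorSum_glue hm (headF hm l) (tailF hm l) (tailF_le hm l hl hsp)
  rw [hg] at h
  exact h

lemma oddCard_of (hm : m ≤ n) (l : Fin n → ℕ) (hl : alhP n l)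
    (hsp : ∀ i : Fin n, (i.1 + 1 ≤ l i ↔ i.1 < m)) :
    oddCard n l = m - oddCard m (headF hm l) := by
  have hg := glue_headF_tailF hm l hsp
  have h := oddCard_glue hm (headF hm l) (tailF hm l) (tailF_le hm l hl hsp)
  rw [hg] at h
  exact h

lemma sum_of (hm : m ≤ n) (l : Fin n → ℕ) (hl : alhP n l)
    (hsp : ∀ i : Fin n, (i.1 + 1 ≤ l i ↔ i.1 < m)) :
    (∑ i, l i) = (m + 1).choose 2 + (∑ i, headF hm l i) + ∑ j, tailF hm l j := by
  have hg := glue_headF_tailF hm l hsp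
  have h := sum_glue hm (headF hm l) (tailF hm l)
  rw [hg] at h
  exact h

end Glue

def innerP (m e0 e1 e2 : ℕ) (l' : Fin m → ℕ) : Prop :=
  alhP m l' ∧ floorSum m l' = e0 ∧ m - oddCard m l' = e1 ∧ (∑ i, l' i) = e2

def baseP (n d0 d1 d2 : ℕ) (l : Fin n → ℕ) : Prop :=
  alhP n l ∧ floorSum n l = d0 ∧ oddCard n l = d1 ∧ (∑ i, l i) = d2

lemma forward_tailPred {n m d0 d1 d2 s : ℕ} (hm : m ≤ n) (l : Fin n → ℕ)
    (h : baseP n d0 d1 d2 l ∧ mI l = m ∧ tailSum l = s) :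
    tailPred m (n - m) s (tailF hm l) := by
  obtain ⟨⟨hl, hf, ho, hs⟩, hmI, hts⟩ := h
  have hsp := hsp_of hl hmI
  refine ⟨tailF_anti hm l hl hsp, tailF_le hm l hl hsp, ?_⟩
  rw [← tail_sum_of hm l hl hsp]
  exact hts

lemma forward_innerP {n m d0 d1 d2 s : ℕ} (hm : m ≤ n) (l : Fin n → ℕ)
    (h : baseP n d0 d1 d2 l ∧ mI l = m ∧ tailSum l = s) :
    innerP m (d0 - m) d1 (d2 - (m + 1).choose 2 - s) (headF hm l) := by
  obtain ⟨⟨hl, hf, ho, hs⟩, hmI, hts⟩ := h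
  have hsp := hsp_of hl hmI
  have h1 := floorSum_of hm l hl hsp
  have h2 := oddCard_of hm l hl hsp
  have h3 := sum_of hm l hl hsp
  have h4 := tail_sum_of hm l hl hsp
  refine ⟨alhP_headF hm l hl hsp, by omega, by omega, by omega⟩

lemma backward_P {n m d0 d1 d2 s : ℕ} (hm : m ≤ n) (h0 : m ≤ d0)
    (h2 : (m + 1).choose 2 + s ≤ d2)
    (c : Fin (n - m) → ℕ) (l' : Fin m → ℕ)
    (hc : tailPred m (n - m) s c)
    (hl' : innerP m (d0 - m) d1 (d2 - (m + 1).choose 2 - s) l') :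
    baseP n d0 d1 d2 (glue hm l' c) ∧ mI (glue hm l' c) = m ∧
      tailSum (glue hm l' c) = s := by
  obtain ⟨hanti, hle, hsum⟩ := hc
  obtain ⟨halh, hfl, hod, hsm⟩ := hl'
  refine ⟨⟨alhP_glue hm l' c halh hanti hle, ?_, ?_, ?_⟩, mI_glue hm l' c hle, ?_⟩
  · rw [floorSum_glue hm l' c hle, hfl]
    omega
  · rw [oddCard_glue hm l' c hle]
    exact hod
  · rw [sum_glue hm l' c, hsm, hsum]
    omega
  · rw [tailSum_glue hm l' c hle]
    exact hsum

lemma core_count (n m s d0 d1 d2 : ℕ) (hm : m ≤ n) (h0 : m ≤ d0)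
    (h2 : (m + 1).choose 2 + s ≤ d2) :
    Nat.card {l : Fin n → ℕ // baseP n d0 d1 d2 l ∧ mI l = m ∧ tailSum l = s}
      = tailCount m (n - m) s *
        Nat.card {l' : Fin m → ℕ //
          innerP m (d0 - m) d1 (d2 - (m + 1).choose 2 - s) l'} := by
  rw [tailCount, ← Nat.card_prod]
  apply Nat.card_congr
  exact
    { toFun := fun x =>
        (⟨tailF hm x.1, forward_tailPred hm x.1 x.2⟩,
         ⟨headF hm x.1, forward_innerP hm x.1 x.2⟩),
      invFun := fun y => ⟨glue hm y.2.1 y.1.1,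
        backward_P hm h0 h2 y.1.1 y.2.1 y.1.2 y.2.2⟩,
      left_inv := fun x => Subtype.ext
        (glue_headF_tailF hm x.1 (hsp_of x.2.1.1 x.2.2.1)),
      right_inv := fun y => Prod.ext
        (Subtype.ext (tailF_glue hm y.2.1 y.1.1))
        (Subtype.ext (headF_glue hm y.2.1 y.1.1)) }

lemma core_empty (n m s d0 d1 d2 : ℕ)
    (hcond : ¬ (m ≤ d0 ∧ (m + 1).choose 2 + s ≤ d2)) :
    Nat.card {l : Fin n → ℕ // baseP n d0 d1 d2 l ∧ mI l = m ∧ tailSum l = s}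
      = 0 := by
  have hemp : IsEmpty {l : Fin n → ℕ // baseP n d0 d1 d2 l ∧ mI l = m ∧ tailSum l = s} := by
    constructor
    rintro ⟨l, ⟨hl, hf, ho, hs⟩, hmI, hts⟩
    apply hcond
    have hm : m ≤ n := hmI ▸ mI_le l
    have hsp := hsp_of hl hmI
    have h1 := floorSum_of hm l hl hsp
    have h2 := sum_of hm l hl hsp
    have h3 := tail_sum_of hm l hl hsp
    constructor
    · omega
    · omega
  exact Nat.card_of_isEmpty



lemma finite_sub' {k : ℕ} (P : (Fin k → ℕ) → Prop) (s : ℕ)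
    (h : ∀ l, P l → ∀ i, l i ≤ s) : Finite {l : Fin k → ℕ // P l} := by
  refine Finite.of_injective
    (fun x => (fun i => (⟨x.1 i, Nat.lt_succ_of_le (h x.1 x.2 i)⟩ : Fin (s + 1)))) ?_
  intro a b hab
  apply Subtype.ext; funext i
  have := congrFun hab i
  simpa [Fin.mk.injEq] using this

lemma card_split' {α : Type*} (P : α → Prop) [Finite {x // P x}] (f : α → ℕ) (N : ℕ)
    (hf : ∀ x, P x → f x < N) :
    Nat.card {x // P x} = ∑ m ∈ Finset.range N, Nat.card {x // P x ∧ f x = m} := by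
  classical
  have := Fintype.ofFinite {x // P x}
  rw [Nat.card_eq_fintype_card, ← Finset.card_univ,
    Finset.card_eq_sum_card_fiberwise
      (f := fun x : {y // P y} => f x.1) (t := Finset.range N)
      (fun x _ => Finset.mem_range.2 (hf x.1 x.2))]
  refine Finset.sum_congr rfl fun m _ => ?_
  rw [← Fintype.card_subtype, ← Nat.card_eq_fintype_card]
  exact Nat.card_congr (Equiv.subtypeSubtypeEquivSubtypeInter P (fun x => f x = m))

lemma baseP_le_sum {n d0 d1 d2 : ℕ} (l : Fin n → ℕ) (h : baseP n d0 d1 d2 l)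
    (i : Fin n) : l i ≤ d2 := by
  have h1 : l i ≤ ∑ j, l j :=
    Finset.single_le_sum (fun j _ => Nat.zero_le _) (Finset.mem_univ i)
  rw [h.2.2.2] at h1
  exact h1

lemma tailSum_le_sum {n : ℕ} (l : Fin n → ℕ) : tailSum l ≤ ∑ i, l i := by
  rw [tailSum]
  exact Finset.sum_le_sum_of_subset (Finset.filter_subset _ _)

lemma count_decomp (n d0 d1 d2 : ℕ) :
    Nat.card {l : Fin n → ℕ // baseP n d0 d1 d2 l}
      = ∑ m ∈ Finset.range (n + 1), ∑ s ∈ Finset.range (d2 + 1),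
          Nat.card {l : Fin n → ℕ //
            baseP n d0 d1 d2 l ∧ mI l = m ∧ tailSum l = s} := by
  have hfin : Finite {l : Fin n → ℕ // baseP n d0 d1 d2 l} :=
    finite_sub' _ d2 baseP_le_sum
  rw [card_split' (baseP n d0 d1 d2) mI (n + 1)
    (fun l _ => Nat.lt_succ_of_le (mI_le l))]
  refine Finset.sum_congr rfl fun m _ => ?_
  have hfin2 : Finite {l : Fin n → ℕ // baseP n d0 d1 d2 l ∧ mI l = m} :=
    finite_sub' _ d2 (fun l hl => baseP_le_sum l hl.1)
  rw [card_split' (fun l : Fin n → ℕ => baseP n d0 d1 d2 l ∧ mI l = m) tailSum (d2 + 1)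
    (fun l hl => Nat.lt_succ_of_le (by
      have := tailSum_le_sum l
      rw [hl.1.2.2.2] at this
      exact this))]
  refine Finset.sum_congr rfl fun s _ => ?_
  exact Nat.card_congr (Equiv.subtypeEquivRight (fun l => and_assoc))

lemma count_main (n d0 d1 d2 : ℕ) :
    Nat.card {l : Fin n → ℕ // baseP n d0 d1 d2 l}
      = ∑ m ∈ Finset.range (n + 1), ∑ s ∈ Finset.range (d2 + 1),
          (if m ≤ d0 ∧ (m + 1).choose 2 + s ≤ d2 then
            tailCount m (n - m) s *
              Nat.card {l' : Fin m → ℕ //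
                innerP m (d0 - m) d1 (d2 - (m + 1).choose 2 - s) l'}
          else 0) := by
  rw [count_decomp]
  refine Finset.sum_congr rfl fun m hm => Finset.sum_congr rfl fun s _ => ?_
  by_cases hcond : m ≤ d0 ∧ (m + 1).choose 2 + s ≤ d2
  · rw [if_pos hcond]
    exact core_count n m s d0 d1 d2
      (by have := Finset.mem_range.1 hm; omega) hcond.1 hcond.2
  · rw [if_neg hcond]
    exact core_empty n m s d0 d1 d2 hcond


def tailS (m b : ℕ) : MvPowerSeries (Fin 3) ℚ :=
  ∑ s ∈ Finset.range (m * b + 1),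
    MvPowerSeries.monomial (Finsupp.single 2 s) (tailCount m b s : ℚ)

lemma eq_single2_iff (s : ℕ) (d : Fin 3 →₀ ℕ) :
    d = Finsupp.single (2 : Fin 3) s ↔ d 0 = 0 ∧ d 1 = 0 ∧ d 2 = s := by
  constructor
  · rintro rfl
    refine ⟨?_, ?_, ?_⟩ <;> simp [Finsupp.single_apply]
  · rintro ⟨h0, h1, h2⟩
    ext i
    fin_cases i <;> simp [Finsupp.single_apply, h0, h1, h2]

lemma coeff_tailS (m b : ℕ) (d : Fin 3 →₀ ℕ) :
    MvPowerSeries.coeff d (tailS m b) =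
      if d 0 = 0 ∧ d 1 = 0 then (tailCount m b (d 2) : ℚ) else 0 := by
  classical
  rw [tailS, map_sum]
  simp only [MvPowerSeries.coeff_monomial, eq_single2_iff]
  by_cases h : d 0 = 0 ∧ d 1 = 0
  · rw [if_pos h]
    have hcond : ∀ s : ℕ, (d 0 = 0 ∧ d 1 = 0 ∧ d 2 = s) ↔ d 2 = s := fun s => by tauto
    simp only [hcond]
    rw [Finset.sum_ite_eq (Finset.range (m*b+1)) (d 2) (fun s => (tailCount m b s : ℚ))]
    split_ifs with h2
    · rfl
    · rw [tailCount_vanish m b (d 2) (by simpa using h2), Nat.cast_zero]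
  · rw [if_neg h]
    apply Finset.sum_eq_zero
    intro s _
    rw [if_neg (by tauto)]

lemma coeff_X2pow_mul (k : ℕ) (f : MvPowerSeries (Fin 3) ℚ) (d : Fin 3 →₀ ℕ) :
    MvPowerSeries.coeff d ((MvPowerSeries.X 2) ^ k * f) =
      if k ≤ d 2 then MvPowerSeries.coeff (d - Finsupp.single 2 k) f else 0 := by
  classical
  rw [MvPowerSeries.X_pow_eq, MvPowerSeries.coeff_monomial_mul]
  simp [Finsupp.single_le_iff]

lemma sub_single2_apply (d : Fin 3 →₀ ℕ) (k : ℕ) :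
    (d - Finsupp.single (2 : Fin 3) k) 0 = d 0 ∧
    (d - Finsupp.single (2 : Fin 3) k) 1 = d 1 ∧
    (d - Finsupp.single (2 : Fin 3) k) 2 = d 2 - k := by
  refine ⟨?_, ?_, ?_⟩ <;> rw [Finsupp.tsub_apply] <;> simp [Finsupp.single_apply]

lemma tailS_zero_right (m : ℕ) : tailS m 0 = 1 := by
  rw [tailS]
  have h1 : m * 0 + 1 = 1 := by omega
  rw [h1, Finset.sum_range_one, Finsupp.single_zero, tailCount_zero_right, if_pos rfl,
    Nat.cast_one, MvPowerSeries.monomial_zero_one]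

lemma tailS_zero_left (b : ℕ) : tailS 0 b = 1 := by
  rw [tailS]
  have h1 : 0 * b + 1 = 1 := by omega
  rw [h1, Finset.sum_range_one, Finsupp.single_zero, tailCount_zero_left, if_pos rfl,
    Nat.cast_one, MvPowerSeries.monomial_zero_one]

lemma tailS_rec (m b : ℕ) :
    tailS (m+1) (b+1) = tailS m (b+1) + (MvPowerSeries.X 2) ^ (m+1) * tailS (m+1) b := by
  apply MvPowerSeries.ext
  intro d
  obtain ⟨e0, e1, e2⟩ := sub_single2_apply d (m+1)
  rw [map_add, coeff_tailS, coeff_tailS, coeff_X2pow_mul, coeff_tailS, tailCount_rec,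
    e0, e1, e2]
  by_cases h : d 0 = 0 ∧ d 1 = 0
  · rw [if_pos h, if_pos h, if_pos h]
    split_ifs with h2 <;> push_cast <;> ring
  · rw [if_neg h, if_neg h, if_neg h]
    simp


lemma qpascal (m b : ℕ) :
    (1 - (MvPowerSeries.X 2 : MvPowerSeries (Fin 3) ℚ) ^ (1+m)) *
        (∏ i ∈ Finset.range m, (1 - (MvPowerSeries.X 2 : MvPowerSeries (Fin 3) ℚ) ^ (b+2+i))) +
      (MvPowerSeries.X 2 : MvPowerSeries (Fin 3) ℚ) ^ (m+1) *
        (∏ i ∈ Finset.range (m+1), (1 - (MvPowerSeries.X 2 : MvPowerSeries (Fin 3) ℚ) ^ (b+1+i)))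
    = ∏ i ∈ Finset.range (m+1), (1 - (MvPowerSeries.X 2 : MvPowerSeries (Fin 3) ℚ) ^ (b+2+i)) := by
  rw [Finset.prod_range_succ
      (fun i => (1 - (MvPowerSeries.X 2 : MvPowerSeries (Fin 3) ℚ) ^ (b+2+i))) m,
    Finset.prod_range_succ'
      (fun i => (1 - (MvPowerSeries.X 2 : MvPowerSeries (Fin 3) ℚ) ^ (b+1+i))) m]
  have e1 : ∀ i : ℕ, b + 1 + (i + 1) = b + 2 + i := fun i => by omega
  simp only [e1, Nat.add_zero]
  have h1 : (MvPowerSeries.X 2 : MvPowerSeries (Fin 3) ℚ) ^ (b+2+m)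
      = (MvPowerSeries.X 2 : MvPowerSeries (Fin 3) ℚ) ^ (b+1) *
        (MvPowerSeries.X 2 : MvPowerSeries (Fin 3) ℚ) ^ (m+1) := by
    rw [← pow_add]; congr 1; omega
  have h2 : (MvPowerSeries.X 2 : MvPowerSeries (Fin 3) ℚ) ^ (1+m)
      = (MvPowerSeries.X 2 : MvPowerSeries (Fin 3) ℚ) ^ (m+1) := by congr 1; omega
  rw [h1, h2]
  ring

lemma key_gauss (m : ℕ) : ∀ b : ℕ,
    (∏ i ∈ Finset.range m, (1 - (MvPowerSeries.X 2 : MvPowerSeries (Fin 3) ℚ) ^ (1+i))) *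
        tailS m b
      = ∏ i ∈ Finset.range m, (1 - (MvPowerSeries.X 2 : MvPowerSeries (Fin 3) ℚ) ^ (b+1+i)) := by
  induction m with
  | zero => intro b; simp [tailS_zero_left]
  | succ m ihm =>
    intro b
    induction b with
    | zero =>
      rw [tailS_zero_right, mul_one]
    | succ b ihb =>
      rw [tailS_rec, mul_add,
        Finset.prod_range_succ
          (fun i => (1 - (MvPowerSeries.X 2 : MvPowerSeries (Fin 3) ℚ) ^ (1+i))) m]
      have hA : (∏ i ∈ Finset.range m,
            (1 - (MvPowerSeries.X 2 : MvPowerSeries (Fin 3) ℚ) ^ (1+i))) *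
            (1 - (MvPowerSeries.X 2 : MvPowerSeries (Fin 3) ℚ) ^ (1+m)) * tailS m (b+1)
          = (1 - (MvPowerSeries.X 2 : MvPowerSeries (Fin 3) ℚ) ^ (1+m)) *
            (∏ i ∈ Finset.range m, (1 - (MvPowerSeries.X 2 : MvPowerSeries (Fin 3) ℚ) ^ (b+1+1+i))) := by
        rw [mul_right_comm, ihm (b+1), mul_comm]
      have hB : (∏ i ∈ Finset.range m,
            (1 - (MvPowerSeries.X 2 : MvPowerSeries (Fin 3) ℚ) ^ (1+i))) *
            (1 - (MvPowerSeries.X 2 : MvPowerSeries (Fin 3) ℚ) ^ (1+m)) *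
            ((MvPowerSeries.X 2 : MvPowerSeries (Fin 3) ℚ) ^ (m+1) * tailS (m+1) b)
          = (MvPowerSeries.X 2 : MvPowerSeries (Fin 3) ℚ) ^ (m+1) *
            (∏ i ∈ Finset.range (m+1), (1 - (MvPowerSeries.X 2 : MvPowerSeries (Fin 3) ℚ) ^ (b+1+i))) := by
        rw [← ihb]
        rw [Finset.prod_range_succ
          (fun i => (1 - (MvPowerSeries.X 2 : MvPowerSeries (Fin 3) ℚ) ^ (1+i))) m]
        ring
      rw [hA, hB]
      have e2 : ∀ i : ℕ, b + 1 + 1 + i = b + 2 + i := fun i => by omega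
      simp only [e2]
      rw [qpascal m b]

lemma gauss_eq_tailS (n m : ℕ) (hm : m ≤ n) :
    (∏ i ∈ Finset.range m, (1 - (MvPowerSeries.X 2 : MvPowerSeries (Fin 3) ℚ) ^ (n + 1 - m + i))) *
      (∏ i ∈ Finset.range m, (1 - (MvPowerSeries.X 2 : MvPowerSeries (Fin 3) ℚ) ^ (1 + i)))⁻¹
    = tailS m (n - m) := by
  have hD : MvPowerSeries.constantCoeff
      (∏ i ∈ Finset.range m, (1 - (MvPowerSeries.X 2 : MvPowerSeries (Fin 3) ℚ) ^ (1 + i))) ≠ 0 := by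
    rw [map_prod]
    have h1 : ∀ i ∈ Finset.range m, MvPowerSeries.constantCoeff
        (1 - (MvPowerSeries.X 2 : MvPowerSeries (Fin 3) ℚ) ^ (1 + i)) = 1 := by
      intro i _
      rw [map_sub, map_one, map_pow, MvPowerSeries.constantCoeff_X, zero_pow (by omega)]
      norm_num
    rw [Finset.prod_congr rfl h1, Finset.prod_const_one]
    norm_num
  have hN : (∏ i ∈ Finset.range m, (1 - (MvPowerSeries.X 2 : MvPowerSeries (Fin 3) ℚ) ^ (n + 1 - m + i)))
      = ∏ i ∈ Finset.range m, (1 - (MvPowerSeries.X 2 : MvPowerSeries (Fin 3) ℚ) ^ ((n - m) + 1 + i)) :=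
    Finset.prod_congr rfl (fun i _ => by rw [show n + 1 - m + i = (n - m) + 1 + i from by omega])
  rw [hN, ← key_gauss m (n - m), mul_comm
    (∏ i ∈ Finset.range m, (1 - (MvPowerSeries.X 2 : MvPowerSeries (Fin 3) ℚ) ^ (1 + i)))
    (tailS m (n - m)), mul_assoc, MvPowerSeries.mul_inv_cancel _ hD, mul_one]


lemma alh_int_iff (n : ℕ) (l : Fin n → ℕ) :
    (∀ i : Fin n, ∀ h : i.1 + 1 < n,
      ((i.1 : ℤ) + 1) * (l ⟨i.1 + 1, h⟩ : ℤ) ≤ ((i.1 : ℤ) + 2) * (l i : ℤ))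
      ↔ alhP n l := by
  constructor
  · intro H i h
    have := H i h
    exact_mod_cast this
  · intro H i h
    have := H i h
    exact_mod_cast this

lemma coeff_alhGF (n : ℕ) (d : Fin 3 →₀ ℕ) :
    MvPowerSeries.coeff d (alhGF n)
      = (Nat.card {l : Fin n → ℕ // baseP n (d 0) (d 1) (d 2) l} : ℚ) := by
  rw [MvPowerSeries.coeff_apply]
  show (Nat.card _ : ℚ) = _
  congr 1
  apply Nat.card_congr
  apply Equiv.subtypeEquivRight
  intro l
  rw [baseP, alh_int_iff, floorSum, oddCard]

lemma coeff_alhGFinner (m : ℕ) (e : Fin 3 →₀ ℕ) :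
    MvPowerSeries.coeff e (alhGFinner m)
      = (Nat.card {l' : Fin m → ℕ // innerP m (e 0) (e 1) (e 2) l'} : ℚ) := by
  rw [MvPowerSeries.coeff_apply]
  show (Nat.card _ : ℚ) = _
  congr 1
  apply Nat.card_congr
  apply Equiv.subtypeEquivRight
  intro l
  rw [innerP, alh_int_iff, floorSum, oddCard]

lemma exp_eq (k a s : ℕ) :
    Finsupp.single (2 : Fin 3) s + Finsupp.single 2 a + Finsupp.single 0 k
      = Finsupp.single (0 : Fin 3) k + Finsupp.single 2 (a + s) := by
  ext i
  fin_cases i <;> simp [Finsupp.single_apply] <;> omega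

lemma term_expand (m b a k : ℕ) (f : MvPowerSeries (Fin 3) ℚ) :
    tailS m b * ((MvPowerSeries.X 2) ^ a * ((MvPowerSeries.X 0) ^ k * f))
      = ∑ s ∈ Finset.range (m * b + 1),
          MvPowerSeries.monomial
            (Finsupp.single (0 : Fin 3) k + Finsupp.single 2 (a + s))
            ((tailCount m b s : ℚ)) * f := by
  rw [tailS, Finset.sum_mul]
  refine Finset.sum_congr rfl fun s _ => ?_
  rw [MvPowerSeries.X_pow_eq, MvPowerSeries.X_pow_eq, ← mul_assoc, ← mul_assoc,
    MvPowerSeries.monomial_mul_monomial, MvPowerSeries.monomial_mul_monomial,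
    mul_one, mul_one, exp_eq]

lemma E_le_iff (k j : ℕ) (d : Fin 3 →₀ ℕ) :
    Finsupp.single (0 : Fin 3) k + Finsupp.single 2 j ≤ d ↔ k ≤ d 0 ∧ j ≤ d 2 := by
  rw [Finsupp.le_def]
  constructor
  · intro h
    have h0 := h 0
    have h2 := h 2
    simp [Finsupp.single_apply] at h0 h2
    exact ⟨h0, h2⟩
  · rintro ⟨h0, h2⟩ i
    fin_cases i <;> simp [Finsupp.single_apply] <;> omega

lemma E_sub_apply (k j : ℕ) (d : Fin 3 →₀ ℕ) :
    (d - (Finsupp.single (0 : Fin 3) k + Finsupp.single (2 : Fin 3) j) : Fin 3 →₀ ℕ) 0 = d 0 - k ∧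
    (d - (Finsupp.single (0 : Fin 3) k + Finsupp.single (2 : Fin 3) j) : Fin 3 →₀ ℕ) 1 = d 1 ∧
    (d - (Finsupp.single (0 : Fin 3) k + Finsupp.single (2 : Fin 3) j) : Fin 3 →₀ ℕ) 2 = d 2 - j := by
  refine ⟨?_, ?_, ?_⟩ <;> rw [Finsupp.tsub_apply] <;> simp [Finsupp.single_apply]

/-- The recurrence for the refined anti-lecture hall generating function:
`A_n(u,v,q) = ∑_{m=0}^{n} [n choose m]_q · q^{binom(m+1,2)} · u^m ·
  ∑_{λ∈A_m} q^{|λ|} u^{|⌊λ⌋|} v^{m-o(⌊λ⌋)}`. -/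
theorem anti_lecture_hall_recurrence (n : ℕ) (hn : 0 < n) :
    alhGF n =
      ∑ m ∈ Finset.range (n + 1),
        ((∏ i ∈ Finset.range m,
            (1 - (MvPowerSeries.X 2 : MvPowerSeries (Fin 3) ℚ) ^ (n + 1 - m + i))) *
         (∏ i ∈ Finset.range m,
            (1 - (MvPowerSeries.X 2 : MvPowerSeries (Fin 3) ℚ) ^ (1 + i)))⁻¹) *
        (MvPowerSeries.X 2 : MvPowerSeries (Fin 3) ℚ) ^ ((m + 1).choose 2) *
        (MvPowerSeries.X 0 : MvPowerSeries (Fin 3) ℚ) ^ m *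
        alhGFinner m := by
  have hterm : ∀ m ∈ Finset.range (n + 1),
      ((∏ i ∈ Finset.range m,
          (1 - (MvPowerSeries.X 2 : MvPowerSeries (Fin 3) ℚ) ^ (n + 1 - m + i))) *
       (∏ i ∈ Finset.range m,
          (1 - (MvPowerSeries.X 2 : MvPowerSeries (Fin 3) ℚ) ^ (1 + i)))⁻¹) *
        (MvPowerSeries.X 2 : MvPowerSeries (Fin 3) ℚ) ^ ((m + 1).choose 2) *
        (MvPowerSeries.X 0 : MvPowerSeries (Fin 3) ℚ) ^ m *
        alhGFinner m
      = tailS m (n - m) *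
          ((MvPowerSeries.X 2) ^ ((m + 1).choose 2) *
            ((MvPowerSeries.X 0) ^ m * alhGFinner m)) := by
    intro m hm
    rw [gauss_eq_tailS n m (by have := Finset.mem_range.1 hm; omega)]
    ring
  rw [Finset.sum_congr rfl hterm]
  apply MvPowerSeries.ext
  intro d
  rw [coeff_alhGF, count_main n (d 0) (d 1) (d 2), map_sum, Nat.cast_sum]
  refine Finset.sum_congr rfl fun m hm => ?_
  rw [Nat.cast_sum, term_expand m (n - m) ((m + 1).choose 2) m (alhGFinner m), map_sum]
  have hle : ∀ s : ℕ, MvPowerSeries.coeff d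
      (MvPowerSeries.monomial
        (Finsupp.single (0 : Fin 3) m + Finsupp.single 2 ((m + 1).choose 2 + s))
        ((tailCount m (n - m) s : ℚ)) * alhGFinner m)
      = ((if m ≤ d 0 ∧ (m + 1).choose 2 + s ≤ d 2 then
            tailCount m (n - m) s *
              Nat.card {l' : Fin m → ℕ //
                innerP m (d 0 - m) (d 1) (d 2 - (m + 1).choose 2 - s) l'}
          else 0 : ℕ) : ℚ) := by
    intro s
    obtain ⟨e0, e1, e2⟩ := E_sub_apply m ((m + 1).choose 2 + s) d
    rw [MvPowerSeries.coeff_monomial_mul, coeff_alhGFinner, e0, e1, e2]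
    simp only [E_le_iff]
    split_ifs with h
    · rw [← Nat.sub_sub]
      push_cast
      ring
    · simp
  rw [Finset.sum_congr rfl (fun s _ => hle s)]
  set natF : ℕ → ℚ := fun s => ((if m ≤ d 0 ∧ (m + 1).choose 2 + s ≤ d 2 then
            tailCount m (n - m) s *
              Nat.card {l' : Fin m → ℕ //
                innerP m (d 0 - m) (d 1) (d 2 - (m + 1).choose 2 - s) l'}
          else 0 : ℕ) : ℚ) with hFdef
  have hF0 : ∀ s : ℕ, d 2 < s → natF s = 0 := by
    intro s hs
    rw [hFdef]
    simp only
    rw [if_neg (by omega), Nat.cast_zero]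
  have hF1 : ∀ s : ℕ, m * (n - m) < s → natF s = 0 := by
    intro s hs
    rw [hFdef]
    simp only
    rw [tailCount_vanish m (n - m) s hs]
    simp
  have e1 : (∑ s ∈ Finset.range (d 2 + 1), natF s)
      = ∑ s ∈ Finset.range (d 2 + m * (n - m) + 1), natF s := by
    apply Finset.sum_subset (Finset.range_subset_range.2 (by omega))
    intro x _ hx
    rw [Finset.mem_range, not_lt] at hx
    exact hF0 x (by omega)
  have e2 : (∑ s ∈ Finset.range (m * (n - m) + 1), natF s)
      = ∑ s ∈ Finset.range (d 2 + m * (n - m) + 1), natF s := by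
    apply Finset.sum_subset (Finset.range_subset_range.2 (by omega))
    intro x _ hx
    rw [Finset.mem_range, not_lt] at hx
    exact hF1 x (by omega)
  rw [e1, ← e2]

end
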